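/- The matched-sample average of imputed potential outcomes satisfies Ỹ^t(w) := (1/n_t) Σ_{i: W_i = t} Ŷ_i(w) = (1/n_t) Σ_{i=1}^{n} T_{iw} (T_{it} + ψ_{it}/m) Y_i^{obs}. -/
import Mathlib


open Finset

/-- The matched-sample average of imputed potential outcomes satisfies
`Ỹ^t(w) := (1/n_t) ∑_{W i = t} Yhat i w = (1/n_t) ∑_i T i w (T i t + ψ i t / m) Yobs i`. -/
theorem matched_average_closed_form {n Z : ℕ} (m : ℕ) (hm : 0 < m)
    (W : Fin n → Fin Z) (Yobs : Fin n → ℝ)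
    (T : Fin n → Fin Z → ℝ) (hT : ∀ i w, T i w = if W i = w then 1 else 0)
    (M : Fin n → Fin Z → Finset (Fin n))
    (hMsub : ∀ i w, ∀ l ∈ M i w, W l = w)
    (hMcard : ∀ i w, W i ≠ w → (M i w).card = m)
    (hMself : ∀ i, M i (W i) = ∅)
    (ψ : Fin n → Fin Z → ℝ)
    (hψ : ∀ i w, ψ i w =
      ∑ l ∈ univ.filter (fun l => W l = w), (if i ∈ M l (W i) then (1 : ℝ) else 0))
    (Yhat : Fin n → Fin Z → ℝ)
    (hYhat : ∀ i w, Yhat i w =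
      if W i = w then Yobs i else (1 / (m : ℝ)) * ∑ l ∈ M i w, Yobs l)
    (w t : Fin Z)
    (nt : ℝ) (hnt : nt = (univ.filter (fun i => W i = t)).card) :
    (1 / nt) * ∑ i ∈ univ.filter (fun i => W i = t), Yhat i w
      = (1 / nt) * ∑ i : Fin n, T i w * (T i t + ψ i t / (m : ℝ)) * Yobs i := by
  congr 1
  have hR : ∀ i : Fin n, T i w * (T i t + ψ i t / (m : ℝ)) * Yobs i
      = if W i = w then (T i t + ψ i t / (m : ℝ)) * Yobs i else 0 := by
    intro i; rw [hT]; split <;> ring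
  rw [Finset.sum_congr rfl (fun i _ => hR i), ← Finset.sum_filter]
  rcases eq_or_ne t w with h | h
  · subst h
    apply Finset.sum_congr rfl
    intro i hi
    simp only [mem_filter] at hi
    rw [hYhat, if_pos hi.2, hT, if_pos hi.2, hψ]
    have hz : ∀ l ∈ univ.filter (fun l => W l = t), (if i ∈ M l (W i) then (1:ℝ) else 0) = 0 := by
      intro l hl
      simp only [mem_filter] at hl
      rw [hi.2, ← hl.2, hMself]
      simp
    rw [Finset.sum_congr rfl hz]
    simp
  · have hL : ∀ i ∈ univ.filter (fun i => W i = t), Yhat i w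
        = (1/(m:ℝ)) * ∑ l ∈ M i w, Yobs l := by
      intro i hi; simp only [mem_filter] at hi
      rw [hYhat, if_neg (by rw [hi.2]; exact h)]
    rw [Finset.sum_congr rfl hL]
    have hR2 : ∀ i ∈ univ.filter (fun i => W i = w), (T i t + ψ i t / (m:ℝ)) * Yobs i
        = (1/(m:ℝ)) * (ψ i t * Yobs i) := by
      intro i hi; simp only [mem_filter] at hi
      rw [hT, if_neg (by rw [hi.2]; exact Ne.symm h)]
      ring
    rw [Finset.sum_congr rfl hR2, ← Finset.mul_sum, ← Finset.mul_sum]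
    congr 1
    have hinner : ∀ i ∈ univ.filter (fun i => W i = t), (∑ l ∈ M i w, Yobs l)
        = ∑ l ∈ univ.filter (fun l => W l = w), (if l ∈ M i w then Yobs l else 0) := by
      intro i hi
      rw [← Finset.sum_filter]
      congr 1
      ext l
      simp only [mem_filter, mem_univ, true_and]
      exact ⟨fun hl => ⟨hMsub i w l hl, hl⟩, fun hl => hl.2⟩
    rw [Finset.sum_congr rfl hinner, Finset.sum_comm]
    apply Finset.sum_congr rfl
    intro l hl
    simp only [mem_filter] at hl
    rw [hψ, Finset.sum_mul]
    apply Finset.sum_congr rfl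
    intro i hi
    rw [hl.2]
    split <;> simp
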